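/- For every quadruple of complex numbers (t2, t6, t8, t12), the surface in ℂ³ defined by F(X,Y,Z) = −(1/4)·X³ + X·Y³ + Z² − (t2/4)·X²·Y + (1/48)·(t6 − t2³/8)·X² + (1/48)·(−t8 + t6·t2/4 − t2⁴/192)·X·Y + (1/576)·(t12 − t8·t2²/8 − t6²/8 + t6·t2³/96)·X = 0 is singular, i.e. there exists a point (X,Y,Z) ∈ ℂ³ with F(X,Y,Z) = 0 at which all three partial derivatives of F vanish. (This is the type F₄ instance of the theorem that every fiber of the quotient deformation is singular.) -/

import Mathlib

open Polynomial in
lemma cubic_root (a b : ℂ) : ∃ y : ℂ, y ^ 3 + a * y + b = 0 := by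
  have hdeg : (0 : WithBot ℕ) < (X ^ 3 + C a * X + C b : ℂ[X]).degree := by
    have h : (X ^ 3 + C a * X + C b : ℂ[X]).degree = 3 := by
      compute_degree!
    rw [h]; norm_num
  obtain ⟨y, hy⟩ := Complex.exists_root hdeg
  refine ⟨y, ?_⟩
  have := hy
  simp [IsRoot, eval_add, eval_pow, eval_mul, eval_C, eval_X] at this
  linear_combination this

/-- Type F₄ instance: every fiber of the quotient deformation is singular. -/
theorem stmt_3 (t2 t6 t8 t12 : ℂ) :
    ∃ X Y Z : ℂ,
      -(1/4) * X ^ 3 + X * Y ^ 3 + Z ^ 2 - (t2 / 4) * X ^ 2 * Y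
        + (1/48) * (t6 - t2 ^ 3 / 8) * X ^ 2
        + (1/48) * (-t8 + t6 * t2 / 4 - t2 ^ 4 / 192) * X * Y
        + (1/576) * (t12 - t8 * t2 ^ 2 / 8 - t6 ^ 2 / 8 + t6 * t2 ^ 3 / 96) * X = 0 ∧
      deriv (fun X' : ℂ =>
        -(1/4) * X' ^ 3 + X' * Y ^ 3 + Z ^ 2 - (t2 / 4) * X' ^ 2 * Y
          + (1/48) * (t6 - t2 ^ 3 / 8) * X' ^ 2
          + (1/48) * (-t8 + t6 * t2 / 4 - t2 ^ 4 / 192) * X' * Y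
          + (1/576) * (t12 - t8 * t2 ^ 2 / 8 - t6 ^ 2 / 8 + t6 * t2 ^ 3 / 96) * X') X = 0 ∧
      deriv (fun Y' : ℂ =>
        -(1/4) * X ^ 3 + X * Y' ^ 3 + Z ^ 2 - (t2 / 4) * X ^ 2 * Y'
          + (1/48) * (t6 - t2 ^ 3 / 8) * X ^ 2
          + (1/48) * (-t8 + t6 * t2 / 4 - t2 ^ 4 / 192) * X * Y'
          + (1/576) * (t12 - t8 * t2 ^ 2 / 8 - t6 ^ 2 / 8 + t6 * t2 ^ 3 / 96) * X) Y = 0 ∧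
      deriv (fun Z' : ℂ =>
        -(1/4) * X ^ 3 + X * Y ^ 3 + Z' ^ 2 - (t2 / 4) * X ^ 2 * Y
          + (1/48) * (t6 - t2 ^ 3 / 8) * X ^ 2
          + (1/48) * (-t8 + t6 * t2 / 4 - t2 ^ 4 / 192) * X * Y
          + (1/576) * (t12 - t8 * t2 ^ 2 / 8 - t6 ^ 2 / 8 + t6 * t2 ^ 3 / 96) * X) Z = 0 := by
  obtain ⟨y, hy⟩ := cubic_root ((1/48) * (-t8 + t6 * t2 / 4 - t2 ^ 4 / 192))
    ((1/576) * (t12 - t8 * t2 ^ 2 / 8 - t6 ^ 2 / 8 + t6 * t2 ^ 3 / 96))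
  refine ⟨0, y, 0, by ring, ?_, ?_, ?_⟩
  · rw [show (fun X' : ℂ =>
        -(1/4) * X' ^ 3 + X' * y ^ 3 + (0:ℂ) ^ 2 - (t2 / 4) * X' ^ 2 * y
          + (1/48) * (t6 - t2 ^ 3 / 8) * X' ^ 2
          + (1/48) * (-t8 + t6 * t2 / 4 - t2 ^ 4 / 192) * X' * y
          + (1/576) * (t12 - t8 * t2 ^ 2 / 8 - t6 ^ 2 / 8 + t6 * t2 ^ 3 / 96) * X') =
      (fun X' : ℂ =>
        -(1/4) * X' ^ 3 + y ^ 3 * X' + 0 - (t2 / 4 * y) * X' ^ 2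
          + (1/48) * (t6 - t2 ^ 3 / 8) * X' ^ 2
          + ((1/48) * (-t8 + t6 * t2 / 4 - t2 ^ 4 / 192) * y) * X'
          + (1/576) * (t12 - t8 * t2 ^ 2 / 8 - t6 ^ 2 / 8 + t6 * t2 ^ 3 / 96) * X') from
      funext fun X' => by ring]
    have : ∀ X' : ℂ, HasDerivAt (fun X' : ℂ =>
        -(1/4) * X' ^ 3 + y ^ 3 * X' + 0 - (t2 / 4 * y) * X' ^ 2
          + (1/48) * (t6 - t2 ^ 3 / 8) * X' ^ 2
          + ((1/48) * (-t8 + t6 * t2 / 4 - t2 ^ 4 / 192) * y) * X'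
          + (1/576) * (t12 - t8 * t2 ^ 2 / 8 - t6 ^ 2 / 8 + t6 * t2 ^ 3 / 96) * X')
        (-(1/4) * (3 * X' ^ 2) + y ^ 3 + 0 - (t2 / 4 * y) * (2 * X')
          + (1/48) * (t6 - t2 ^ 3 / 8) * (2 * X')
          + ((1/48) * (-t8 + t6 * t2 / 4 - t2 ^ 4 / 192) * y)
          + (1/576) * (t12 - t8 * t2 ^ 2 / 8 - t6 ^ 2 / 8 + t6 * t2 ^ 3 / 96)) X' := by
      intro X'
      have h1 := (hasDerivAt_pow 3 X').const_mul (-(1/4) : ℂ)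
      have h2 := (hasDerivAt_id X').const_mul (y ^ 3)
      have h3 : HasDerivAt (fun _ : ℂ => (0:ℂ)) 0 X' := hasDerivAt_const _ _
      have h4 := (hasDerivAt_pow 2 X').const_mul (t2 / 4 * y)
      have h5 := (hasDerivAt_pow 2 X').const_mul ((1/48) * (t6 - t2 ^ 3 / 8))
      have h6 := (hasDerivAt_id X').const_mul ((1/48) * (-t8 + t6 * t2 / 4 - t2 ^ 4 / 192) * y)
      have h7 := (hasDerivAt_id X').const_mul
          ((1/576) * (t12 - t8 * t2 ^ 2 / 8 - t6 ^ 2 / 8 + t6 * t2 ^ 3 / 96))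
      have := (((((h1.add (by simpa using h2)).add h3).sub h4).add h5).add
          (by simpa using h6)).add (by simpa using h7)
      simpa [mul_comm, Pi.add_def, Pi.sub_def] using this
    rw [(this 0).deriv]
    linear_combination hy
  · simp
  · rw [show (fun Z' : ℂ =>
        -(1/4) * (0:ℂ) ^ 3 + 0 * y ^ 3 + Z' ^ 2 - (t2 / 4) * (0:ℂ) ^ 2 * y
          + (1/48) * (t6 - t2 ^ 3 / 8) * (0:ℂ) ^ 2
          + (1/48) * (-t8 + t6 * t2 / 4 - t2 ^ 4 / 192) * 0 * y
          + (1/576) * (t12 - t8 * t2 ^ 2 / 8 - t6 ^ 2 / 8 + t6 * t2 ^ 3 / 96) * 0) =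
      (fun Z' : ℂ => Z' ^ 2) from funext fun Z' => by ring]
    simp
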